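/- With Φ_k as above, the intersection of two distinct maximal unlinked sets in F_p^{2k} has cardinality at most p^{k-1}. -/

import Mathlib

open Finset

/-- `Φ_k(u,v) = ∑ i, u_{i1} (v_{i2} - u_{i2})` on `𝔽_p^{2k}`, realized as
`Fin k → ZMod p × ZMod p` (first component = odd coordinate, second
component = even coordinate). -/
def Phik (p k : ℕ) (u v : Fin k → ZMod p × ZMod p) : ZMod p :=
  ∑ i, (u i).1 * ((v i).2 - (u i).2)

/-- A set is unlinked if `Φ_k` vanishes on all ordered pairs from it. -/
def Unlinked (p k : ℕ) (U : Set (Fin k → ZMod p × ZMod p)) : Prop :=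
  ∀ u ∈ U, ∀ v ∈ U, Phik p k u v = 0

/-- A maximal unlinked set: unlinked and not properly contained in any other
unlinked set. -/
def MaximalUnlinked (p k : ℕ) (U : Set (Fin k → ZMod p × ZMod p)) : Prop :=
  Unlinked p k U ∧ ∀ U', Unlinked p k U' → U ⊆ U' → U' = U

section Aux

variable {p k : ℕ}

/-- The standard dot product bilinear form on `Fin k → ZMod p`. -/
def dotB (p k : ℕ) : LinearMap.BilinForm (ZMod p) (Fin k → ZMod p) :=
  LinearMap.mk₂ (ZMod p) (fun x y => ∑ i, x i * y i)
    (fun m₁ m₂ n => by simp [add_mul, Finset.sum_add_distrib])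
    (fun c m n => by simp [Finset.mul_sum, mul_assoc])
    (fun m n₁ n₂ => by simp [mul_add, Finset.sum_add_distrib])
    (fun c m n => by
      simp only [Pi.smul_apply, smul_eq_mul, Finset.mul_sum]
      exact Finset.sum_congr rfl fun i _ => by ring)

lemma dotB_apply (x y : Fin k → ZMod p) : dotB p k x y = ∑ i, x i * y i := rfl

lemma dotB_comm (x y : Fin k → ZMod p) : dotB p k x y = dotB p k y x := by
  rw [dotB_apply, dotB_apply]
  exact Finset.sum_congr rfl fun i _ => mul_comm _ _

lemma dotB_refl : (dotB p k).IsRefl := fun x y h => by rwa [dotB_comm]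

lemma dotB_nondeg : (dotB p k).Nondegenerate := by
  refine (dotB_refl (p := p) (k := k)).nondegenerate_iff_separatingLeft.mpr ?_
  intro x hx
  funext i
  have := hx (Pi.single i 1)
  simpa [dotB_apply, Pi.single_apply, mul_ite, Finset.sum_ite_eq'] using this

/-- First components. -/
def fstv (u : Fin k → ZMod p × ZMod p) : Fin k → ZMod p := fun i => (u i).1

/-- Second components. -/
def sndv (u : Fin k → ZMod p × ZMod p) : Fin k → ZMod p := fun i => (u i).2

lemma phik_eq (u v : Fin k → ZMod p × ZMod p) :
    Phik p k u v = dotB p k (fstv u) (sndv v - sndv u) := rfl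

lemma unlinked_dot {S : Set (Fin k → ZMod p × ZMod p)} (hS : Unlinked p k S)
    {u w w' : Fin k → ZMod p × ZMod p} (hu : u ∈ S) (hw : w ∈ S) (hw' : w' ∈ S) :
    dotB p k (fstv u) (sndv w - sndv w') = 0 := by
  have h1 := hS u hu w hw
  have h2 := hS u hu w' hw'
  rw [phik_eq] at h1 h2
  have h3 : sndv w - sndv w' = (sndv w - sndv u) - (sndv w' - sndv u) := by abel
  rw [h3, map_sub, h1, h2, sub_zero]

lemma span_dot_zero {S : Set (Fin k → ZMod p)} {v : Fin k → ZMod p}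
    (h : ∀ x ∈ S, dotB p k x v = 0) :
    ∀ n ∈ Submodule.span (ZMod p) S, dotB p k n v = 0 := by
  intro n hn
  refine Submodule.span_induction (fun x hx => h x hx) ?_ ?_ ?_ hn
  · rw [map_zero, LinearMap.zero_apply]
  · intro x y _ _ hx0 hy0
    rw [map_add, LinearMap.add_apply, hx0, hy0, add_zero]
  · intro c x _ hx0
    rw [map_smul, LinearMap.smul_apply, hx0, smul_zero]

end Aux

set_option maxHeartbeats 4000000 in
/-- The intersection of two distinct maximal unlinked sets in `𝔽_p^{2k}` has
cardinality at most `p^(k-1)`. -/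
theorem card_inter_maximalUnlinked_le (p k : ℕ) (hp : p.Prime) (hk : 1 ≤ k)
    (U U' : Set (Fin k → ZMod p × ZMod p))
    (hU : MaximalUnlinked p k U) (hU' : MaximalUnlinked p k U') (hne : U ≠ U') :
    Nat.card ↥(U ∩ U') ≤ p ^ (k - 1) := by
  haveI : Fact p.Prime := ⟨hp⟩
  rcases (U ∩ U').eq_empty_or_nonempty with hem | ⟨w0, hw0⟩
  · rw [hem]; simp
  classical
  have hWU : U ∩ U' ⊆ U := Set.inter_subset_left
  have hWU' : U ∩ U' ⊆ U' := Set.inter_subset_right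
  set A : Submodule (ZMod p) (Fin k → ZMod p) := Submodule.span (ZMod p) (fstv '' (U ∩ U')) with hA
  set V : Submodule (ZMod p) (Fin k → ZMod p) :=
    Submodule.span (ZMod p) ((fun w => sndv w - sndv w0) '' (U ∩ U')) with hV
  -- membership of dot-product-zero facts
  have hVA : V ≤ (dotB p k).orthogonal A := by
    rw [hV, Submodule.span_le]
    rintro _ ⟨w, hw, rfl⟩
    rw [SetLike.mem_coe, LinearMap.BilinForm.mem_orthogonal_iff]
    intro n hn
    exact span_dot_zero
      (fun x hx => by
        obtain ⟨w', hw', rfl⟩ := hx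
        exact unlinked_dot hU.1 (hWU hw') (hWU hw) (hWU hw0)) n hn
  have hfr : Module.finrank (ZMod p) (Fin k → ZMod p) = k := by
    rw [Module.finrank_pi, Fintype.card_fin]
  have horthA : Module.finrank (ZMod p) ((dotB p k).orthogonal A) =
      k - Module.finrank (ZMod p) A := by
    rw [LinearMap.BilinForm.finrank_orthogonal dotB_nondeg, hfr]
  have hAk : Module.finrank (ZMod p) A ≤ k := by
    have h := A.finrank_le
    rwa [hfr] at h
  have hVle : Module.finrank (ZMod p) V ≤ k - Module.finrank (ZMod p) A :=
    horthA ▸ Submodule.finrank_mono hVA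
  -- the key strict inequality
  have hkey : Module.finrank (ZMod p) A + Module.finrank (ZMod p) V ≤ k - 1 := by
    by_contra hcon
    push_neg at hcon
    have heq : Module.finrank (ZMod p) A + Module.finrank (ZMod p) V = k := by omega
    -- V = orthogonal A
    have hVeq : V = (dotB p k).orthogonal A :=
      Submodule.eq_of_le_of_finrank_le hVA (by omega)
    -- A ≤ orthogonal V, hence by dimensions A = orthogonal V
    have hAV : A ≤ (dotB p k).orthogonal V := by
      rw [hA, Submodule.span_le]
      rintro _ ⟨w, hw, rfl⟩
      rw [SetLike.mem_coe, LinearMap.BilinForm.mem_orthogonal_iff]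
      intro n hn
      refine span_dot_zero (fun x hx => ?_) n hn
      obtain ⟨w', hw', rfl⟩ := hx
      rw [dotB_comm]
      exact unlinked_dot hU.1 (hWU hw) (hWU hw') (hWU hw0)
    have horthV : Module.finrank (ZMod p) ((dotB p k).orthogonal V) =
        k - Module.finrank (ZMod p) V := by
      rw [LinearMap.BilinForm.finrank_orthogonal dotB_nondeg, hfr]
    have hAeq : A = (dotB p k).orthogonal V :=
      Submodule.eq_of_le_of_finrank_le hAV (by omega)
    -- now show U ⊆ U'
    have hsub : U ⊆ U' := by
      intro u hu
      -- fstv u ∈ A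
      have hfA : ∀ z, (∀ w ∈ U ∩ U', dotB p k (fstv z) (sndv w - sndv w0) = 0) →
          fstv z ∈ A := by
        intro z hz
        rw [hAeq, LinearMap.BilinForm.mem_orthogonal_iff]
        intro n hn
        refine span_dot_zero (fun x hx => ?_) n hn
        obtain ⟨w, hw, rfl⟩ := hx
        rw [dotB_comm]
        exact hz w hw
      have hau : fstv u ∈ A := hfA u fun w hw =>
        unlinked_dot hU.1 hu (hWU hw) (hWU hw0)
      have hbu : ∀ n ∈ A, dotB p k n (sndv u - sndv w0) = 0 := by
        refine span_dot_zero fun x hx => ?_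
        obtain ⟨w, hw, rfl⟩ := hx
        exact unlinked_dot hU.1 (hWU hw) hu (hWU hw0)
      -- U' ∪ {u} is unlinked
      have hun : Unlinked p k (insert u U') := by
        have hav' : ∀ v' ∈ U', fstv v' ∈ A := fun v' hv' => hfA v' fun w hw =>
          unlinked_dot hU'.1 hv' (hWU' hw) (hWU' hw0)
        have hbv' : ∀ v' ∈ U', ∀ n ∈ A, dotB p k n (sndv v' - sndv w0) = 0 := by
          intro v' hv'
          refine span_dot_zero fun x hx => ?_
          obtain ⟨w, hw, rfl⟩ := hx
          exact unlinked_dot hU'.1 (hWU' hw) hv' (hWU' hw0)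
        rintro z (rfl | hz) z' (rfl | hz')
        · simp [Phik]
        · -- Phik u z' with z' ∈ U'
          rw [phik_eq]
          have h3 : sndv z' - sndv z =
              (sndv z' - sndv w0) - (sndv z - sndv w0) := by abel
          rw [h3, map_sub, hbv' z' hz' _ hau, hbu _ hau, sub_zero]
        · -- Phik z u with z ∈ U'
          rw [phik_eq]
          have h3 : sndv z' - sndv z =
              (sndv z' - sndv w0) - (sndv z - sndv w0) := by abel
          rw [h3, map_sub, hbu _ (hav' z hz), hbv' z hz _ (hav' z hz), sub_zero]
        · exact hU'.1 z hz z' hz'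
      have := hU'.2 (insert u U') hun (Set.subset_insert u U')
      rw [← this]
      exact Set.mem_insert u U'
    exact hne ((hU.2 U' hU'.1 hsub).symm)
  -- counting
  haveI : NeZero p := ⟨hp.pos.ne'⟩
  haveI : Finite A := Subtype.finite
  haveI : Finite V := Subtype.finite
  have hinj : Function.Injective (fun w : ↥(U ∩ U') =>
      ((⟨fstv w.1, Submodule.subset_span ⟨w.1, w.2, rfl⟩⟩ : A),
       (⟨sndv w.1 - sndv w0, Submodule.subset_span ⟨w.1, w.2, rfl⟩⟩ : V))) := by
    rintro ⟨w, hw⟩ ⟨w', hw'⟩ h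
    simp only [Prod.mk.injEq, Subtype.mk.injEq, sub_left_inj] at h
    obtain ⟨h1, h2⟩ := h
    ext i
    · exact congrFun h1 i
    · exact congrFun h2 i
  have hle := Nat.card_le_card_of_injective _ hinj
  have hcardA : Nat.card A = p ^ Module.finrank (ZMod p) A := by
    haveI : Fintype A := Fintype.ofFinite _
    rw [Nat.card_eq_fintype_card, Module.card_eq_pow_finrank (K := ZMod p), ZMod.card]
  have hcardV : Nat.card V = p ^ Module.finrank (ZMod p) V := by
    haveI : Fintype V := Fintype.ofFinite _
    rw [Nat.card_eq_fintype_card, Module.card_eq_pow_finrank (K := ZMod p), ZMod.card]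
  calc Nat.card ↥(U ∩ U') ≤ Nat.card (A × V) := hle
    _ = p ^ (Module.finrank (ZMod p) A + Module.finrank (ZMod p) V) := by
        rw [Nat.card_prod, hcardA, hcardV, pow_add]
    _ ≤ p ^ (k - 1) := Nat.pow_le_pow_right hp.pos hkey
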